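/- Let G be a graph and v a vertex such that G contains two cycles C1 and C2 whose intersection is a path P with at least one internal vertex, and such that v has a neighbor in C1 \ P, a neighbor in C2 \ P, and a neighbor in the interior of P. Then G contains a K_{3,3} minor. -/

import Mathlib

open SimpleGraph

/-- `B` is a system of branch sets witnessing a `K_n` minor in `G`:
nonempty, connected, pairwise disjoint sets with an edge between any two of them. -/
def IsCompleteMinorWitness {V : Type*} (G : SimpleGraph V) (n : ℕ)
    (B : Fin n → Set V) : Prop :=
  (∀ i, (B i).Nonempty) ∧ (∀ i, (G.induce (B i)).Connected) ∧
  (∀ i j, i ≠ j → Disjoint (B i) (B j)) ∧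
  (∀ i j, i ≠ j → ∃ u ∈ B i, ∃ v ∈ B j, G.Adj u v)

/-- `G` contains a complete minor `K_n`. -/
def HasCompleteMinor {V : Type*} (G : SimpleGraph V) (n : ℕ) : Prop :=
  ∃ B : Fin n → Set V, IsCompleteMinorWitness G n B

/-- `A`, `B` are systems of branch sets witnessing a complete bipartite `K_{m,n}`
minor in `G`. -/
def IsBipartiteMinorWitness {V : Type*} (G : SimpleGraph V) (m n : ℕ)
    (A : Fin m → Set V) (B : Fin n → Set V) : Prop :=
  (∀ i, (A i).Nonempty) ∧ (∀ j, (B j).Nonempty) ∧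
  (∀ i, (G.induce (A i)).Connected) ∧ (∀ j, (G.induce (B j)).Connected) ∧
  (∀ i j, i ≠ j → Disjoint (A i) (A j)) ∧
  (∀ i j, i ≠ j → Disjoint (B i) (B j)) ∧
  (∀ i j, Disjoint (A i) (B j)) ∧
  (∀ i j, ∃ u ∈ A i, ∃ v ∈ B j, G.Adj u v)

/-- `G` contains a complete bipartite minor `K_{m,n}`. -/
def HasBipartiteMinor {V : Type*} (G : SimpleGraph V) (m n : ℕ) : Prop :=
  ∃ (A : Fin m → Set V) (B : Fin n → Set V), IsBipartiteMinorWitness G m n A B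

/-- Wagner characterization: a graph is planar iff it has no `K_5` and no `K_{3,3}` minor. -/
def IsPlanar {V : Type*} (G : SimpleGraph V) : Prop :=
  ¬ HasCompleteMinor G 5 ∧ ¬ HasBipartiteMinor G 3 3

/-- Minor characterization of outerplanarity: no `K_4` and no `K_{2,3}` minor. -/
def IsOuterplanar {V : Type*} (G : SimpleGraph V) : Prop :=
  ¬ HasCompleteMinor G 4 ∧ ¬ HasBipartiteMinor G 2 3


section Helpers
variable {V : Type*} {G : SimpleGraph V}

lemma reachable_induce_of_support {S : Set V} {x y : V} (p : G.Walk x y)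
    (hp : ∀ z ∈ p.support, z ∈ S) :
    (G.induce S).Reachable ⟨x, hp x p.start_mem_support⟩ ⟨y, hp y p.end_mem_support⟩ := by
  induction p with
  | nil => exact Reachable.refl _
  | @cons x' y' z' h q ih =>
    have hx : x' ∈ S := hp _ (Walk.start_mem_support _)
    have hy : y' ∈ S := hp _ (by simp)
    have hadj : (G.induce S).Adj ⟨x', hx⟩ ⟨y', hy⟩ := h
    exact Reachable.trans hadj.reachable (ih (fun z hz => hp z (by simp [hz])))

lemma induce_connected_of_center {S : Set V} {c : V} (hc : c ∈ S)
    (h : ∀ x ∈ S, ∃ p : G.Walk c x, ∀ z ∈ p.support, z ∈ S) :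
    (G.induce S).Connected := by
  rw [connected_iff]
  refine ⟨fun u v => ?_, ⟨⟨c, hc⟩⟩⟩
  obtain ⟨pu, hpu⟩ := h u u.2
  obtain ⟨pv, hpv⟩ := h v v.2
  exact (reachable_induce_of_support pu hpu).symm.trans (reachable_induce_of_support pv hpv)

lemma induce_singleton_connected (x : V) : (G.induce {x}).Connected := by
  rw [connected_iff]
  refine ⟨fun u v => ?_, ⟨⟨x, rfl⟩⟩⟩
  have : u = v := Subtype.ext (u.2.trans v.2.symm)
  rw [this]

lemma walk_decomp {a b w : V} (p : G.Walk a b) (hw : w ∈ p.support)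
    (hwa : w ≠ a) (hwb : w ≠ b) :
    ∃ (u t : V) (q : G.Walk a u) (r : G.Walk t b),
      G.Adj u w ∧ G.Adj w t ∧ p.support = q.support ++ w :: r.support := by
  classical
  obtain ⟨t, hwt, r, hd⟩ := Walk.exists_eq_cons_of_ne hwb (p.dropUntil w hw)
  obtain ⟨u, hwu, r', hq⟩ := Walk.exists_eq_cons_of_ne hwa (p.takeUntil w hw).reverse
  refine ⟨u, t, r'.reverse, r, hwu.symm, hwt, ?_⟩
  have hsupp : p.support = (p.takeUntil w hw).support ++ ((p.dropUntil w hw).support).tail := by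
    rw [← Walk.support_append, p.take_spec hw]
  have h1 : (p.takeUntil w hw).support = r'.reverse.support ++ [w] := by
    have h2 : (p.takeUntil w hw).support.reverse = w :: r'.support := by
      rw [← Walk.support_reverse, hq, Walk.support_cons]
    have := congrArg List.reverse h2
    simpa [Walk.support_reverse] using this
  rw [hsupp, h1, hd]
  simp [Walk.support_cons]

lemma nodup_facts {w : V} {q r : List V} (hn : (q ++ w :: r).Nodup) :
    w ∉ q ∧ w ∉ r ∧ ∀ x, x ∈ q → x ∉ r := by
  rw [List.nodup_append] at hn
  obtain ⟨h1, h2, h3⟩ := hn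
  refine ⟨fun h => h3 _ h _ (by simp) rfl, (List.nodup_cons.1 h2).1, fun x hx hx' => h3 _ hx _ (by simp [hx']) rfl⟩


end Helpers

set_option maxHeartbeats 1000000 in
/-- A twin-cycle configuration: three internally disjoint `a`–`b` paths (two cycles
sharing the path `P2`, which has an internal vertex), together with a vertex `v`
having a neighbor in the interior of each path, forces a `K_{3,3}` minor. -/
theorem k33_minor_of_twin_cycle {V : Type*} (G : SimpleGraph V)
    (a b : V) (hab : a ≠ b)
    (P1 P2 P3 : G.Walk a b)
    (hp1 : P1.IsPath) (hp2 : P2.IsPath) (hp3 : P3.IsPath)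
    (hd12 : ∀ x, x ∈ P1.support → x ∈ P2.support → x = a ∨ x = b)
    (hd13 : ∀ x, x ∈ P1.support → x ∈ P3.support → x = a ∨ x = b)
    (hd23 : ∀ x, x ∈ P2.support → x ∈ P3.support → x = a ∨ x = b)
    (v : V) (hv1 : v ∉ P1.support) (hv2 : v ∉ P2.support) (hv3 : v ∉ P3.support)
    (w1 w2 w3 : V)
    (ha1 : G.Adj v w1) (ha2 : G.Adj v w2) (ha3 : G.Adj v w3)
    (hw1 : w1 ∈ P1.support ∧ w1 ≠ a ∧ w1 ≠ b)
    (hw2 : w2 ∈ P2.support ∧ w2 ≠ a ∧ w2 ≠ b)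
    (hw3 : w3 ∈ P3.support ∧ w3 ≠ a ∧ w3 ≠ b) :
    HasBipartiteMinor G 3 3 := by
  classical
  obtain ⟨hw1m, hw1a, hw1b⟩ := hw1
  obtain ⟨hw2m, hw2a, hw2b⟩ := hw2
  obtain ⟨hw3m, hw3a, hw3b⟩ := hw3
  obtain ⟨u1, t1, q1, r1, hu1, ht1, hs1⟩ := walk_decomp P1 hw1m hw1a hw1b
  obtain ⟨u2, t2, q2, r2, hu2, ht2, hs2⟩ := walk_decomp P2 hw2m hw2a hw2b
  obtain ⟨u3, t3, q3, r3, hu3, ht3, hs3⟩ := walk_decomp P3 hw3m hw3a hw3b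
  obtain ⟨hwq1, hwr1, hqr1⟩ := nodup_facts (hs1 ▸ hp1.support_nodup)
  obtain ⟨hwq2, hwr2, hqr2⟩ := nodup_facts (hs2 ▸ hp2.support_nodup)
  obtain ⟨hwq3, hwr3, hqr3⟩ := nodup_facts (hs3 ▸ hp3.support_nodup)
  -- membership characterizations
  have mem1 : ∀ x, x ∈ P1.support ↔ (x ∈ q1.support ∨ x = w1 ∨ x ∈ r1.support) := by
    intro x; rw [hs1]; simp
  have mem2 : ∀ x, x ∈ P2.support ↔ (x ∈ q2.support ∨ x = w2 ∨ x ∈ r2.support) := by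
    intro x; rw [hs2]; simp
  have mem3 : ∀ x, x ∈ P3.support ↔ (x ∈ q3.support ∨ x = w3 ∨ x ∈ r3.support) := by
    intro x; rw [hs3]; simp
  have hbq1 : b ∉ q1.support := fun h => hqr1 b h r1.end_mem_support
  have hbq2 : b ∉ q2.support := fun h => hqr2 b h r2.end_mem_support
  have hbq3 : b ∉ q3.support := fun h => hqr3 b h r3.end_mem_support
  have har1 : a ∉ r1.support := fun h => hqr1 a q1.start_mem_support h
  have har2 : a ∉ r2.support := fun h => hqr2 a q2.start_mem_support h
  have har3 : a ∉ r3.support := fun h => hqr3 a q3.start_mem_support h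
  -- cross: w_j not in P_i for i ≠ j
  have hw2P1 : w2 ∉ P1.support := fun h => (hd12 w2 h hw2m).elim hw2a hw2b
  have hw3P1 : w3 ∉ P1.support := fun h => (hd13 w3 h hw3m).elim hw3a hw3b
  have hw1P2 : w1 ∉ P2.support := fun h => (hd12 w1 hw1m h).elim hw1a hw1b
  have hw3P2 : w3 ∉ P2.support := fun h => (hd23 w3 h hw3m).elim hw3a hw3b
  have hw1P3 : w1 ∉ P3.support := fun h => (hd13 w1 hw1m h).elim hw1a hw1b
  have hw2P3 : w2 ∉ P3.support := fun h => (hd23 w2 hw2m h).elim hw2a hw2b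
  set Sa : Set V := {x | x ∈ q1.support ∨ x ∈ q2.support ∨ x ∈ q3.support} with hSa
  set Sb : Set V := {x | x ∈ r1.support ∨ x ∈ r2.support ∨ x ∈ r3.support} with hSb
  -- Sa ⊆ corresponding P supports etc.
  have hSaP : ∀ x ∈ Sa, x ∈ P1.support ∨ x ∈ P2.support ∨ x ∈ P3.support := by
    intro x hx
    rcases hx with h | h | h
    · exact Or.inl ((mem1 x).2 (Or.inl h))
    · exact Or.inr (Or.inl ((mem2 x).2 (Or.inl h)))
    · exact Or.inr (Or.inr ((mem3 x).2 (Or.inl h)))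
  have hSbP : ∀ x ∈ Sb, x ∈ P1.support ∨ x ∈ P2.support ∨ x ∈ P3.support := by
    intro x hx
    rcases hx with h | h | h
    · exact Or.inl ((mem1 x).2 (Or.inr (Or.inr h)))
    · exact Or.inr (Or.inl ((mem2 x).2 (Or.inr (Or.inr h))))
    · exact Or.inr (Or.inr ((mem3 x).2 (Or.inr (Or.inr h))))
  have hvSa : v ∉ Sa := fun h => (hSaP v h).elim hv1 (fun h' => h'.elim hv2 hv3)
  have hvSb : v ∉ Sb := fun h => (hSbP v h).elim hv1 (fun h' => h'.elim hv2 hv3)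
  have hvw1 : v ≠ w1 := fun h => hv1 (h ▸ hw1m)
  have hvw2 : v ≠ w2 := fun h => hv2 (h ▸ hw2m)
  have hvw3 : v ≠ w3 := fun h => hv3 (h ▸ hw3m)
  have hw12 : w1 ≠ w2 := fun h => hw1P2 (h ▸ hw2m)
  have hw13 : w1 ≠ w3 := fun h => hw1P3 (h ▸ hw3m)
  have hw23 : w2 ≠ w3 := fun h => hw2P3 (h ▸ hw3m)
  have hw1Sa : w1 ∉ Sa := by
    rintro (h | h | h)
    · exact hwq1 h
    · exact hw1P2 ((mem2 w1).2 (Or.inl h))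
    · exact hw1P3 ((mem3 w1).2 (Or.inl h))
  have hw2Sa : w2 ∉ Sa := by
    rintro (h | h | h)
    · exact hw2P1 ((mem1 w2).2 (Or.inl h))
    · exact hwq2 h
    · exact hw2P3 ((mem3 w2).2 (Or.inl h))
  have hw3Sa : w3 ∉ Sa := by
    rintro (h | h | h)
    · exact hw3P1 ((mem1 w3).2 (Or.inl h))
    · exact hw3P2 ((mem2 w3).2 (Or.inl h))
    · exact hwq3 h
  have hw1Sb : w1 ∉ Sb := by
    rintro (h | h | h)
    · exact hwr1 h
    · exact hw1P2 ((mem2 w1).2 (Or.inr (Or.inr h)))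
    · exact hw1P3 ((mem3 w1).2 (Or.inr (Or.inr h)))
  have hw2Sb : w2 ∉ Sb := by
    rintro (h | h | h)
    · exact hw2P1 ((mem1 w2).2 (Or.inr (Or.inr h)))
    · exact hwr2 h
    · exact hw2P3 ((mem3 w2).2 (Or.inr (Or.inr h)))
  have hw3Sb : w3 ∉ Sb := by
    rintro (h | h | h)
    · exact hw3P1 ((mem1 w3).2 (Or.inr (Or.inr h)))
    · exact hw3P2 ((mem2 w3).2 (Or.inr (Or.inr h)))
    · exact hwr3 h
  -- Sa ∩ Sb = ∅
  have hcross : ∀ {i j : ℕ}, True := fun {_ _} => trivial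
  have hqirj : ∀ x, x ∈ Sa → x ∉ Sb := by
    intro x hx hy
    have hPa : _ := hSaP x hx
    -- handle by cases
    rcases hx with h1 | h1 | h1 <;> rcases hy with h2 | h2 | h2
    · exact hqr1 x h1 h2
    · rcases hd12 x ((mem1 x).2 (Or.inl h1)) ((mem2 x).2 (Or.inr (Or.inr h2))) with rfl | rfl
      · exact har2 h2
      · exact hbq1 h1
    · rcases hd13 x ((mem1 x).2 (Or.inl h1)) ((mem3 x).2 (Or.inr (Or.inr h2))) with rfl | rfl
      · exact har3 h2
      · exact hbq1 h1
    · rcases hd12 x ((mem1 x).2 (Or.inr (Or.inr h2))) ((mem2 x).2 (Or.inl h1)) with rfl | rfl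
      · exact har1 h2
      · exact hbq2 h1
    · exact hqr2 x h1 h2
    · rcases hd23 x ((mem2 x).2 (Or.inl h1)) ((mem3 x).2 (Or.inr (Or.inr h2))) with rfl | rfl
      · exact har3 h2
      · exact hbq2 h1
    · rcases hd13 x ((mem1 x).2 (Or.inr (Or.inr h2))) ((mem3 x).2 (Or.inl h1)) with rfl | rfl
      · exact har1 h2
      · exact hbq3 h1
    · rcases hd23 x ((mem2 x).2 (Or.inr (Or.inr h2))) ((mem3 x).2 (Or.inl h1)) with rfl | rfl
      · exact har2 h2
      · exact hbq3 h1
    · exact hqr3 x h1 h2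
  have haSa : a ∈ Sa := Or.inl q1.start_mem_support
  have hbSb : b ∈ Sb := Or.inl r1.end_mem_support
  have hSaConn : (G.induce Sa).Connected := by
    apply induce_connected_of_center haSa
    rintro x (hx | hx | hx)
    · exact ⟨q1.takeUntil x hx, fun z hz => Or.inl (q1.support_takeUntil_subset hx hz)⟩
    · exact ⟨q2.takeUntil x hx, fun z hz => Or.inr (Or.inl (q2.support_takeUntil_subset hx hz))⟩
    · exact ⟨q3.takeUntil x hx, fun z hz => Or.inr (Or.inr (q3.support_takeUntil_subset hx hz))⟩
  have hSbConn : (G.induce Sb).Connected := by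
    apply induce_connected_of_center hbSb
    rintro x (hx | hx | hx)
    · exact ⟨(r1.dropUntil x hx).reverse, fun z hz =>
        Or.inl (r1.support_dropUntil_subset hx (by simpa [Walk.support_reverse] using hz))⟩
    · exact ⟨(r2.dropUntil x hx).reverse, fun z hz =>
        Or.inr (Or.inl (r2.support_dropUntil_subset hx (by simpa [Walk.support_reverse] using hz)))⟩
    · exact ⟨(r3.dropUntil x hx).reverse, fun z hz =>
        Or.inr (Or.inr (r3.support_dropUntil_subset hx (by simpa [Walk.support_reverse] using hz)))⟩
  refine ⟨![{v}, Sa, Sb], ![{w1}, {w2}, {w3}], ?_, ?_, ?_, ?_, ?_, ?_, ?_, ?_⟩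
  · intro i; fin_cases i
    · exact ⟨v, rfl⟩
    · exact ⟨a, haSa⟩
    · exact ⟨b, hbSb⟩
  · intro j; fin_cases j <;> exact ⟨_, rfl⟩
  · intro i; fin_cases i
    · exact induce_singleton_connected v
    · exact hSaConn
    · exact hSbConn
  · intro j; fin_cases j <;> exact induce_singleton_connected _
  · intro i j hij
    have d1 : Disjoint ({v} : Set V) Sa := Set.disjoint_singleton_left.2 hvSa
    have d2 : Disjoint ({v} : Set V) Sb := Set.disjoint_singleton_left.2 hvSb
    have d3 : Disjoint Sa Sb := Set.disjoint_left.2 hqirj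
    fin_cases i <;> fin_cases j <;>
      first
        | exact absurd rfl hij
        | exact d1 | exact d2 | exact d3
        | exact d1.symm | exact d2.symm | exact d3.symm
  · intro i j hij
    have e1 : Disjoint ({w1} : Set V) {w2} := Set.disjoint_singleton.2 hw12
    have e2 : Disjoint ({w1} : Set V) {w3} := Set.disjoint_singleton.2 hw13
    have e3 : Disjoint ({w2} : Set V) {w3} := Set.disjoint_singleton.2 hw23
    fin_cases i <;> fin_cases j <;>
      first
        | exact absurd rfl hij
        | exact e1 | exact e2 | exact e3
        | exact e1.symm | exact e2.symm | exact e3.symm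
  · intro i j
    fin_cases i <;> fin_cases j
    · exact Set.disjoint_singleton.2 hvw1
    · exact Set.disjoint_singleton.2 hvw2
    · exact Set.disjoint_singleton.2 hvw3
    · exact Set.disjoint_singleton_right.2 hw1Sa
    · exact Set.disjoint_singleton_right.2 hw2Sa
    · exact Set.disjoint_singleton_right.2 hw3Sa
    · exact Set.disjoint_singleton_right.2 hw1Sb
    · exact Set.disjoint_singleton_right.2 hw2Sb
    · exact Set.disjoint_singleton_right.2 hw3Sb
  · intro i j
    fin_cases i <;> fin_cases j
    · exact ⟨v, rfl, w1, rfl, ha1⟩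
    · exact ⟨v, rfl, w2, rfl, ha2⟩
    · exact ⟨v, rfl, w3, rfl, ha3⟩
    · exact ⟨u1, Or.inl q1.end_mem_support, w1, rfl, hu1⟩
    · exact ⟨u2, Or.inr (Or.inl q2.end_mem_support), w2, rfl, hu2⟩
    · exact ⟨u3, Or.inr (Or.inr q3.end_mem_support), w3, rfl, hu3⟩
    · exact ⟨t1, Or.inl r1.start_mem_support, w1, rfl, ht1.symm⟩
    · exact ⟨t2, Or.inr (Or.inl r2.start_mem_support), w2, rfl, ht2.symm⟩
    · exact ⟨t3, Or.inr (Or.inr r3.start_mem_support), w3, rfl, ht3.symm⟩
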